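/- Let L be a set of s positive integers. If F ⊆ 2^[n] satisfies min{|A \ B|, |B \ A|} ∈ L for every pair of distinct A, B ∈ F, then |F| ≤ Σ_{i=0}^{s} C(n, i). -/

import Mathlib

open Finset Submodule

noncomputable section AuxStmt17

/-- indicator of `S ⊆ B` as a ℚ-valued function. -/
def ind17 {n : ℕ} (S : Finset (Fin n)) : Finset (Fin n) → ℚ :=
  fun B => if S ⊆ B then 1 else 0

lemma key_step17 {n : ℕ} (A S : Finset (Fin n)) (ℓ : ℕ) :
    (fun B => (((A \ B).card : ℚ) - ℓ) * ind17 S B)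
      = (((A.card : ℚ) - (A ∩ S).card - ℓ) • ind17 S
        - ∑ i ∈ A \ S, ind17 (insert i S)) := by
  funext B
  simp only [Pi.sub_apply, Pi.smul_apply, Finset.sum_apply, smul_eq_mul, ind17]
  by_cases h : S ⊆ B
  · simp only [if_pos h, mul_one]
    have h1 : ∀ i ∈ A \ S, (if insert i S ⊆ B then (1:ℚ) else 0)
        = if i ∈ B then 1 else 0 := by
      intro i hi
      by_cases hiB : i ∈ B
      · simp [Finset.insert_subset_iff, hiB, h]
      · simp [Finset.insert_subset_iff, hiB]
    rw [Finset.sum_congr rfl h1, Finset.sum_boole, Finset.filter_mem_eq_inter]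
    have e1 : (A ∩ S) ∪ ((A \ S) ∩ B) = A ∩ B := by
      ext x
      have hx := @h x
      simp only [Finset.mem_union, Finset.mem_inter, Finset.mem_sdiff]
      tauto
    have e2 : Disjoint (A ∩ S) ((A \ S) ∩ B) := by
      rw [Finset.disjoint_left]
      intro x hx hx'
      simp only [Finset.mem_inter, Finset.mem_sdiff] at hx hx'
      exact hx'.1.2 hx.2
    have e3 : (A ∩ S).card + ((A \ S) ∩ B).card = (A ∩ B).card := by
      rw [← Finset.card_union_of_disjoint e2, e1]
    have e4 : (A \ B).card + (A ∩ B).card = A.card :=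
      Finset.card_sdiff_add_card_inter A B
    have : ((A \ B).card : ℚ) + (A ∩ B).card = A.card := by exact_mod_cast e4
    have : ((A ∩ S).card : ℚ) + ((A \ S) ∩ B).card = (A ∩ B).card := by exact_mod_cast e3
    linarith
  · simp only [if_neg h, mul_zero]
    have h1 : ∀ i ∈ A \ S, (if insert i S ⊆ B then (1:ℚ) else 0) = 0 := by
      intro i hi
      rw [if_neg]
      intro hsub
      exact h (Finset.Subset.trans (Finset.subset_insert i S) hsub)
    rw [Finset.sum_congr rfl h1]
    simp

lemma prod_mem_span17 {n : ℕ} (A : Finset (Fin n)) (L : Finset ℕ) :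
    (fun B => ∏ ℓ ∈ L, (((A \ B).card : ℚ) - ℓ))
      ∈ span ℚ (ind17 '' {S : Finset (Fin n) | S.card ≤ L.card}) := by
  classical
  induction L using Finset.induction with
  | empty =>
    have he : (fun B : Finset (Fin n) => ∏ ℓ ∈ (∅ : Finset ℕ), (((A \ B).card : ℚ) - ℓ))
        = ind17 (∅ : Finset (Fin n)) := by
      funext B; simp [ind17]
    rw [he]
    exact subset_span ⟨∅, by simp, rfl⟩
  | @insert ℓ L' hℓ ih =>
    have hcard : (insert ℓ L').card = L'.card + 1 := Finset.card_insert_of_notMem hℓ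
    rw [hcard]
    have hrw : (fun B => ∏ m ∈ insert ℓ L', (((A \ B).card : ℚ) - m))
        = (LinearMap.mulLeft ℚ (fun B => (((A \ B).card : ℚ) - ℓ)))
            (fun B => ∏ m ∈ L', (((A \ B).card : ℚ) - m)) := by
      funext B
      simp [LinearMap.mulLeft_apply, Finset.prod_insert hℓ]
    rw [hrw]
    have himg := Submodule.apply_mem_span_image_of_mem_span
      (LinearMap.mulLeft ℚ (fun B => (((A \ B).card : ℚ) - ℓ))) ih
    refine Submodule.span_le.mpr ?_ himg
    rintro q ⟨p, ⟨S, hS, rfl⟩, rfl⟩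
    simp only [Set.mem_setOf_eq] at hS
    have : (LinearMap.mulLeft ℚ (fun B => (((A \ B).card : ℚ) - ℓ))) (ind17 S)
        = (((A.card : ℚ) - (A ∩ S).card - ℓ) • ind17 S
          - ∑ i ∈ A \ S, ind17 (insert i S)) := by
      rw [← key_step17]
      rfl
    rw [this]
    refine sub_mem (smul_mem _ _ (subset_span ⟨S, ?_, rfl⟩)) (sum_mem ?_)
    · exact le_trans hS (Nat.le_succ _)
    · intro i hi
      refine subset_span ⟨insert i S, ?_, rfl⟩
      calc (insert i S).card ≤ S.card + 1 := Finset.card_insert_le i S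
        _ ≤ L'.card + 1 := by omega

end AuxStmt17

theorem stmt_17 (n s : ℕ) (L : Finset ℕ) (hLpos : ∀ ℓ ∈ L, 0 < ℓ)
    (hLs : L.card = s)
    (F : Finset (Finset (Fin n)))
    (hF : ∀ A ∈ F, ∀ B ∈ F, A ≠ B → min (A \ B).card (B \ A).card ∈ L) :
    F.card ≤ ∑ i ∈ Finset.range (s + 1), n.choose i := by
  classical
  set f : Finset (Fin n) → (Finset (Fin n) → ℚ) :=
    fun A B => ∏ ℓ ∈ L, (((A \ B).card : ℚ) - ℓ) with hf
  -- diagonal values are nonzero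
  have hdiag : ∀ A : Finset (Fin n), f A A ≠ 0 := by
    intro A
    have h0 : (A \ A).card = 0 := by simp
    rw [hf]
    simp only [h0, Nat.cast_zero, zero_sub]
    rw [Finset.prod_ne_zero_iff]
    intro ℓ hℓ
    have := hLpos ℓ hℓ
    have : (ℓ : ℚ) ≠ 0 := by exact_mod_cast this.ne'
    simpa using this
  -- off-diagonal vanishing for card-ordered pairs
  have hzero : ∀ A ∈ F, ∀ B ∈ F, A ≠ B → A.card ≤ B.card → f A B = 0 := by
    intro A hA B hB hne hcard
    have e1 : (A \ B).card + (A ∩ B).card = A.card := Finset.card_sdiff_add_card_inter A B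
    have e2 : (B \ A).card + (B ∩ A).card = B.card := Finset.card_sdiff_add_card_inter B A
    have e3 : (A ∩ B).card = (B ∩ A).card := by rw [Finset.inter_comm]
    have hle : (A \ B).card ≤ (B \ A).card := by omega
    have hmin : min (A \ B).card (B \ A).card = (A \ B).card := min_eq_left hle
    have hmem : (A \ B).card ∈ L := by
      have := hF A hA B hB hne
      rwa [hmin] at this
    rw [hf]
    exact Finset.prod_eq_zero hmem (by simp)
  -- span membership
  have hspan : ∀ A : Finset (Fin n),
      f A ∈ span ℚ (ind17 '' {S : Finset (Fin n) | S.card ≤ s}) := by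
    intro A
    rw [← hLs]
    exact prod_mem_span17 A L
  -- linear independence (triangular argument)
  have hind : LinearIndependent ℚ (fun A : F => f (A : Finset (Fin n))) := by
    rw [linearIndependent_iff']
    intro t g hsum
    induction t using Finset.strongInduction with
    | _ t ih =>
      intro i hi
      have hne : t.Nonempty := ⟨i, hi⟩
      obtain ⟨A, hAt, hmax⟩ := Finset.exists_max_image t
        (fun j : F => (j : Finset (Fin n)).card) hne
      have hgA : g A = 0 := by
        have hev := congrFun hsum (A : Finset (Fin n))
        simp only [Finset.sum_apply, Pi.smul_apply, smul_eq_mul, Pi.zero_apply] at hev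
        have hsingle : ∑ j ∈ t, g j * f (j : Finset (Fin n)) (A : Finset (Fin n))
            = g A * f (A : Finset (Fin n)) (A : Finset (Fin n)) := by
          refine Finset.sum_eq_single A ?_ (fun h => absurd hAt h)
          intro j hjt hjA
          have hjA' : (j : Finset (Fin n)) ≠ (A : Finset (Fin n)) :=
            fun h => hjA (Subtype.ext h)
          rw [hzero _ j.2 _ A.2 hjA' (hmax j hjt), mul_zero]
        rw [hsingle] at hev
        exact (mul_eq_zero.mp hev).resolve_right (hdiag _)
      have hsum' : ∑ j ∈ t.erase A, g j • f (j : Finset (Fin n)) = 0 := by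
        rw [Finset.sum_erase_eq_sub hAt, hsum, hgA, zero_smul, sub_zero]
      by_cases hiA : i = A
      · rw [hiA]; exact hgA
      · exact ih (t.erase A) (Finset.erase_ssubset hAt) hsum' i
          (Finset.mem_erase.mpr ⟨hiA, hi⟩)
  -- put everything in the finite-dimensional span
  set T : Finset (Finset (Fin n)) := Finset.univ.filter (fun S => S.card ≤ s) with hT
  set G : Finset (Finset (Fin n) → ℚ) := T.image ind17 with hG
  have hsetG : (ind17 '' {S : Finset (Fin n) | S.card ≤ s}) = (G : Set (Finset (Fin n) → ℚ)) := by
    rw [hG, Finset.coe_image, hT]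
    ext S
    simp
  set W : Submodule ℚ (Finset (Fin n) → ℚ) := span ℚ (G : Set (Finset (Fin n) → ℚ)) with hW
  haveI : FiniteDimensional ℚ W := FiniteDimensional.span_of_finite ℚ G.finite_toSet
  have hmemW : ∀ A : Finset (Fin n), f A ∈ W := by
    intro A
    rw [hW, ← hsetG]
    exact hspan A
  set v : F → W := fun A => ⟨f (A : Finset (Fin n)), hmemW _⟩ with hv
  have hindv : LinearIndependent ℚ v := by
    apply LinearIndependent.of_comp W.subtype
    exact hind
  have hcard1 : Fintype.card F ≤ Module.finrank ℚ W :=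
    hindv.fintype_card_le_finrank
  have hcard2 : Module.finrank ℚ W ≤ G.card := finrank_span_finset_le_card G
  have hcard3 : G.card ≤ T.card := Finset.card_image_le
  have hcard4 : T.card = ∑ i ∈ Finset.range (s + 1), n.choose i := by
    rw [Finset.card_eq_sum_card_fiberwise
      (f := Finset.card) (t := Finset.range (s + 1)) ?_]
    · refine Finset.sum_congr rfl ?_
      intro i hi
      rw [Finset.mem_range] at hi
      have : T.filter (fun S => S.card = i) = Finset.powersetCard i Finset.univ := by
        ext S
        simp only [hT, Finset.mem_filter, Finset.mem_univ, true_and,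
          Finset.mem_powersetCard, Finset.subset_univ]
        omega
      rw [this, Finset.card_powersetCard, Finset.card_univ, Fintype.card_fin]
    · intro S hS
      rw [hT, Finset.mem_coe, Finset.mem_filter] at hS
      rw [Finset.mem_coe, Finset.mem_range]
      omega
  calc F.card = Fintype.card F := (Fintype.card_coe F).symm
    _ ≤ Module.finrank ℚ W := hcard1
    _ ≤ G.card := hcard2
    _ ≤ T.card := hcard3
    _ = _ := hcard4
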